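/- Let V and R be finite-dimensional real vector spaces, D an endomorphism of V with D² = −id, and θ an involution of V with D∘θ = −θ∘D. Set V₋ := ker(θ + id). Then the map ω ↦ b_ω, where b_ω(x,y) := ω(Dx, y) for x,y ∈ V₋, is a linear isomorphism from the space {ω : V × V → R bilinear : ω(x,y) = −ω(y,x), ω(Dx,y) + ω(x,Dy) = 0, and ω(θx,θy) = −ω(x,y) for all x,y ∈ V} onto the space of symmetric bilinear maps V₋ × V₋ → R. -/

import Mathlib

open LinearMap

/-- The map ω ↦ b_ω, b_ω(x,y) = ω(Dx,y) on V₋ = ker(θ + id). -/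
noncomputable def iota9 {V R : Type*} [AddCommGroup V] [Module ℝ V]
    [AddCommGroup R] [Module ℝ R] (D θ : V →ₗ[ℝ] V) (ω : V →ₗ[ℝ] V →ₗ[ℝ] R) :
    ↥(LinearMap.ker (θ + LinearMap.id)) →ₗ[ℝ]
      ↥(LinearMap.ker (θ + LinearMap.id)) →ₗ[ℝ] R :=
  (ω ∘ₗ (D ∘ₗ (LinearMap.ker (θ + LinearMap.id)).subtype)).compl₂
    ((LinearMap.ker (θ + LinearMap.id)).subtype)

section Aux9
variable {V R : Type*} [AddCommGroup V] [Module ℝ V] [AddCommGroup R] [Module ℝ R]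

lemma memK9_iff (θ : V →ₗ[ℝ] V) (x : V) :
    x ∈ LinearMap.ker (θ + LinearMap.id) ↔ θ x = -x := by
  simp [LinearMap.mem_ker, add_eq_zero_iff_eq_neg]

/-- projection onto V₋, x ↦ (x - θx)/2 -/
noncomputable def Pmap9 (θ : V →ₗ[ℝ] V) (hθ2 : θ ∘ₗ θ = LinearMap.id) :
    V →ₗ[ℝ] ↥(LinearMap.ker (θ + LinearMap.id)) :=
  LinearMap.codRestrict _ ((2⁻¹ : ℝ) • (LinearMap.id - θ)) (fun x => by
    have h := LinearMap.congr_fun hθ2 x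
    simp only [LinearMap.comp_apply, LinearMap.id_apply] at h
    rw [memK9_iff]
    simp only [LinearMap.smul_apply, LinearMap.sub_apply, LinearMap.id_apply,
      map_smul, map_sub, h]
    module)

/-- x ↦ D((x+θx)/2), lands in V₋ -/
noncomputable def Qmap9 (D θ : V →ₗ[ℝ] V) (hθ2 : θ ∘ₗ θ = LinearMap.id)
    (hDθ : D ∘ₗ θ = -(θ ∘ₗ D)) :
    V →ₗ[ℝ] ↥(LinearMap.ker (θ + LinearMap.id)) :=
  LinearMap.codRestrict _ (D ∘ₗ ((2⁻¹ : ℝ) • (LinearMap.id + θ))) (fun x => by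
    have h := LinearMap.congr_fun hθ2 x
    simp only [LinearMap.comp_apply, LinearMap.id_apply] at h
    have hc : ∀ v, θ (D v) = -(D (θ v)) := fun v => by
      have := LinearMap.congr_fun hDθ v
      simp only [LinearMap.comp_apply, LinearMap.neg_apply] at this
      rw [this, neg_neg]
    rw [memK9_iff]
    simp only [LinearMap.comp_apply, LinearMap.smul_apply, LinearMap.add_apply,
      LinearMap.id_apply, map_smul, map_add, hc, h]
    module)


section ident
variable (D θ : V →ₗ[ℝ] V)

lemma hDpt9 (hD2 : D ∘ₗ D = -LinearMap.id) (v : V) : D (D v) = -v := by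
  have := LinearMap.congr_fun hD2 v
  simpa using this

lemma hθpt9 (hθ2 : θ ∘ₗ θ = LinearMap.id) (v : V) : θ (θ v) = v := by
  have := LinearMap.congr_fun hθ2 v
  simpa using this

lemma hcpt9 (hDθ : D ∘ₗ θ = -(θ ∘ₗ D)) (v : V) : D (θ v) = -(θ (D v)) := by
  have := LinearMap.congr_fun hDθ v
  simpa using this

variable (hθ2 : θ ∘ₗ θ = LinearMap.id) (hDθ : D ∘ₗ θ = -(θ ∘ₗ D))

lemma PD9 (x : V) : Pmap9 θ hθ2 (D x) = Qmap9 D θ hθ2 hDθ x := by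
  apply Subtype.ext
  show (2⁻¹ : ℝ) • (D x - θ (D x)) = D ((2⁻¹ : ℝ) • (x + θ x))
  have h1 : θ (D x) = -(D (θ x)) := by rw [hcpt9 D θ hDθ x, neg_neg]
  rw [map_smul, map_add, h1]
  module

lemma QD9 (hD2 : D ∘ₗ D = -LinearMap.id) (x : V) : Qmap9 D θ hθ2 hDθ (D x) = -(Pmap9 θ hθ2 x) := by
  apply Subtype.ext
  show D ((2⁻¹ : ℝ) • (D x + θ (D x))) = -((2⁻¹ : ℝ) • (x - θ x))
  rw [map_smul, map_add, hDpt9 D hD2 x]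
  have h1 : D (θ (D x)) = -(θ (D (D x))) := hcpt9 D θ hDθ (D x)
  rw [h1, hDpt9 D hD2 x, map_neg]
  module

lemma Pθ9 (x : V) : Pmap9 θ hθ2 (θ x) = -(Pmap9 θ hθ2 x) := by
  apply Subtype.ext
  show (2⁻¹ : ℝ) • (θ x - θ (θ x)) = -((2⁻¹ : ℝ) • (x - θ x))
  rw [hθpt9 θ hθ2 x]; module

lemma Qθ9 (x : V) : Qmap9 D θ hθ2 hDθ (θ x) = Qmap9 D θ hθ2 hDθ x := by
  apply Subtype.ext
  show D ((2⁻¹ : ℝ) • (θ x + θ (θ x))) = D ((2⁻¹ : ℝ) • (x + θ x))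
  rw [hθpt9 θ hθ2 x]
  congr 1; module

lemma PmemK9 (x : V) (hx : x ∈ LinearMap.ker (θ + LinearMap.id)) :
    (Pmap9 θ hθ2 x : V) = x := by
  show (2⁻¹ : ℝ) • (x - θ x) = x
  rw [(memK9_iff θ x).mp hx]; module

lemma QmemK9 (x : V) (hx : x ∈ LinearMap.ker (θ + LinearMap.id)) :
    Qmap9 D θ hθ2 hDθ x = 0 := by
  apply Subtype.ext
  show D ((2⁻¹ : ℝ) • (x + θ x)) = 0
  rw [(memK9_iff θ x).mp hx]
  simp

lemma decomp9 (hD2 : D ∘ₗ D = -LinearMap.id) (x : V) :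
    (Pmap9 θ hθ2 x : V) - D (Qmap9 D θ hθ2 hDθ x : V) = x := by
  show (2⁻¹ : ℝ) • (x - θ x) - D (D ((2⁻¹ : ℝ) • (x + θ x))) = x
  rw [hDpt9 D hD2 ((2⁻¹ : ℝ) • (x + θ x))]
  module

end ident

end Aux9

set_option maxHeartbeats 1000000 in
/-- For D with D² = −id and an involution θ anticommuting with D, the map ω ↦ ω(D·,·)
is a linear bijection from the antisymmetric, D-invariant, θ-anti-invariant R-valued
bilinear maps on V onto the symmetric bilinear maps on V₋. -/
theorem stmt9 {V R : Type*} [AddCommGroup V] [Module ℝ V] [FiniteDimensional ℝ V]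
    [AddCommGroup R] [Module ℝ R] [FiniteDimensional ℝ R]
    (D : V →ₗ[ℝ] V)
    (hD2 : D ∘ₗ D = -LinearMap.id)
    (θ : V →ₗ[ℝ] V)
    (hθ2 : θ ∘ₗ θ = LinearMap.id)
    (hDθ : D ∘ₗ θ = -(θ ∘ₗ D)) :
    (∀ ω η : V →ₗ[ℝ] V →ₗ[ℝ] R, iota9 D θ (ω + η) = iota9 D θ ω + iota9 D θ η) ∧
      (∀ (c : ℝ) (ω : V →ₗ[ℝ] V →ₗ[ℝ] R), iota9 D θ (c • ω) = c • iota9 D θ ω) ∧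
      Set.BijOn (iota9 (R := R) D θ)
        {ω : V →ₗ[ℝ] V →ₗ[ℝ] R | (∀ x y, ω x y = -(ω y x)) ∧
          (∀ x y, ω (D x) y + ω x (D y) = 0) ∧
          (∀ x y, ω (θ x) (θ y) = -(ω x y))}
        {b : ↥(LinearMap.ker (θ + LinearMap.id)) →ₗ[ℝ]
            ↥(LinearMap.ker (θ + LinearMap.id)) →ₗ[ℝ] R |
          ∀ x y, b x y = b y x} := by
  have hiota : ∀ (ω : V →ₗ[ℝ] V →ₗ[ℝ] R) (x y : ↥(LinearMap.ker (θ + LinearMap.id))),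
      iota9 D θ ω x y = ω (D (x : V)) (y : V) := fun ω x y => rfl
  set P := Pmap9 θ hθ2 with hP
  set Q := Qmap9 D θ hθ2 hDθ with hQ
  -- ω vanishes on K × K if θ-anti-invariant
  have claimK : ∀ (ω : V →ₗ[ℝ] V →ₗ[ℝ] R),
      (∀ x y, ω (θ x) (θ y) = -(ω x y)) →
      ∀ (u v : ↥(LinearMap.ker (θ + LinearMap.id))), ω (u : V) (v : V) = 0 := by
    intro ω h3 u v
    have hu : θ (u : V) = -(u : V) := (memK9_iff θ _).mp u.2
    have hv : θ (v : V) = -(v : V) := (memK9_iff θ _).mp v.2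
    have h := h3 (u : V) (v : V)
    simp only [hu, hv, map_neg, LinearMap.neg_apply, neg_neg] at h
    have h2a : ω (u : V) (v : V) + ω (u : V) (v : V) = 0 := by
      nth_rewrite 1 [h]; exact neg_add_cancel _
    have hhalf : ω (u : V) (v : V)
        = (2⁻¹ : ℝ) • (ω (u : V) (v : V) + ω (u : V) (v : V)) := by
      rw [← two_smul ℝ, ← mul_smul]; norm_num
    rw [hhalf, h2a, smul_zero]
  -- key reconstruction formula
  have key : ∀ (ω : V →ₗ[ℝ] V →ₗ[ℝ] R),
      (∀ x y, ω (D x) y + ω x (D y) = 0) →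
      (∀ x y, ω (θ x) (θ y) = -(ω x y)) →
      ∀ x y : V, ω x y = iota9 D θ ω (P x) (Q y) - iota9 D θ ω (Q x) (P y) := by
    intro ω h2 h3 x y
    have hx := decomp9 D θ hθ2 hDθ hD2 x
    have hy := decomp9 D θ hθ2 hDθ hD2 y
    have expand : ω x y = ω (P x : V) (P y : V) - ω (P x : V) (D (Q y : V))
        - ω (D (Q x : V)) (P y : V) + ω (D (Q x : V)) (D (Q y : V)) := by
      conv_lhs => rw [← hx, ← hy]
      simp only [map_sub, LinearMap.sub_apply]
      abel
    have t1 : ω (P x : V) (P y : V) = 0 := claimK ω h3 (P x) (P y)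
    have t2 : ω (P x : V) (D (Q y : V)) = -(ω (D (P x : V)) (Q y : V)) :=
      eq_neg_of_add_eq_zero_right (h2 (P x : V) (Q y : V))
    have t4 : ω (D (Q x : V)) (D (Q y : V)) = 0 := by
      have h := h2 (D (Q x : V)) (Q y : V)
      rw [hDpt9 D hD2 (Q x : V), map_neg, LinearMap.neg_apply] at h
      have h' : ω (D (Q x : V)) (D (Q y : V)) = ω (Q x : V) (Q y : V) := by
        have := eq_neg_of_add_eq_zero_right h
        rw [this, neg_neg]
      rw [h', claimK ω h3 (Q x) (Q y)]
    rw [expand, t1, t2, t4, hiota, hiota]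
    abel
  refine ⟨?_, ?_, ?_, ?_, ?_⟩
  · intro ω η
    ext x y
    simp only [hiota, LinearMap.add_apply]
  · intro c ω
    ext x y
    simp only [hiota, LinearMap.smul_apply]
  · -- MapsTo
    rintro ω ⟨h1, h2, h3⟩ 
    intro x y
    rw [hiota, hiota, h1 (D (x : V)) (y : V)]
    exact neg_eq_of_add_eq_zero_left (h2 (y : V) (x : V))
  · -- InjOn
    rintro ω ⟨_, hω2, hω3⟩ η ⟨_, hη2, hη3⟩ hEq
    ext x y
    rw [key ω hω2 hω3 x y, key η hη2 hη3 x y, hEq]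
  · -- SurjOn
    rintro b hb
    set B : V →ₗ[ℝ] V →ₗ[ℝ] R := (b ∘ₗ Q).compl₂ P with hB
    set ω : V →ₗ[ℝ] V →ₗ[ℝ] R := B.flip - B with hω
    have ωapp : ∀ x y : V, ω x y = b (Q y) (P x) - b (Q x) (P y) := fun x y => rfl
    have PK : ∀ u : ↥(LinearMap.ker (θ + LinearMap.id)), P (u : V) = u := by
      intro u; exact Subtype.ext (PmemK9 θ hθ2 (u : V) u.2)
    have QK : ∀ u : ↥(LinearMap.ker (θ + LinearMap.id)), Q (u : V) = 0 := by
      intro u; exact QmemK9 D θ hθ2 hDθ (u : V) u.2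
    refine ⟨ω, ⟨?_, ?_, ?_⟩, ?_⟩
    · intro x y
      rw [ωapp, ωapp, neg_sub]
    · intro x y
      rw [ωapp, ωapp, PD9 D θ hθ2 hDθ x, PD9 D θ hθ2 hDθ y,
        QD9 D θ hθ2 hDθ hD2 x, QD9 D θ hθ2 hDθ hD2 y,
        map_neg, map_neg, LinearMap.neg_apply, hb (Q y) (Q x), hb (P x) (P y)]
      abel_nf
      simp
      simp only [← hP, ← hQ]
      abel
    · intro x y
      rw [ωapp, ωapp, Pθ9 θ hθ2 x, Pθ9 θ hθ2 y, Qθ9 D θ hθ2 hDθ x, Qθ9 D θ hθ2 hDθ y,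
        map_neg, map_neg]
      abel
    · ext x y
      rw [hiota, ωapp, PD9 D θ hθ2 hDθ (x : V), QD9 D θ hθ2 hDθ hD2 (x : V),
        QK y, PK y, QK x, map_neg, LinearMap.neg_apply, PK x]
      simp
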